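/- Let R be a ring of Nevanlinna–Smirnov type (H^∞ ⊆ R ⊆ N, and every f ∈ R equals g/h with g, h ∈ H^∞, h invertible in R). If J₁ and J₂ are ideals of R with J₁ ∩ H^∞ = J₂ ∩ H^∞, then J₁ = J₂. -/
import Mathlib


noncomputable def logPlus (x : ℝ) : ℝ := max (Real.log x) 0

/-- Membership criterion for the algebra `H^∞` of bounded holomorphic functions on the disk. -/
def IsHinf (f : ℂ → ℂ) : Prop :=
  DifferentiableOn ℂ f (Metric.ball 0 1) ∧
    ∃ M : ℝ, ∀ z ∈ Metric.ball (0 : ℂ) 1, ‖f z‖ ≤ M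

/-- Membership criterion for the Nevanlinna class `N`. -/
def IsNevanlinna (f : ℂ → ℂ) : Prop :=
  DifferentiableOn ℂ f (Metric.ball 0 1) ∧
    ∃ M : ℝ, ∀ r ∈ Set.Ioo (0 : ℝ) 1,
      (∫ θ in (0 : ℝ)..(2 * Real.pi),
        logPlus ‖f (r * Complex.exp (θ * Complex.I))‖) / (2 * Real.pi) ≤ M


theorem ideal_le_of_trace_le (R Hinf : Subring (ℂ → ℂ)) (hHR : Hinf ≤ R)
    (hNS : ∀ f : R, ∃ g h : Hinf, ∃ hhR : (h : ℂ → ℂ) ∈ R,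
      IsUnit (⟨(h : ℂ → ℂ), hhR⟩ : R) ∧ (h : ℂ → ℂ) * (f : ℂ → ℂ) = g)
    (J₁ J₂ : Ideal R)
    (htrace : Ideal.comap (Subring.inclusion hHR) J₁ ≤
      Ideal.comap (Subring.inclusion hHR) J₂) :
    J₁ ≤ J₂ := by
  intro f hf
  obtain ⟨g, h, hhR, hu, heq⟩ := hNS f
  have hmem : Subring.inclusion hHR g ∈ J₁ := by
    have : Subring.inclusion hHR g = (⟨(h : ℂ → ℂ), hhR⟩ : R) * f := by
      ext1
      exact heq.symm
    rw [this]
    exact J₁.mul_mem_left _ hf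
  have hmem2 : (⟨(h : ℂ → ℂ), hhR⟩ : R) * f ∈ J₂ := by
    have : Subring.inclusion hHR g = (⟨(h : ℂ → ℂ), hhR⟩ : R) * f := by
      ext1; exact heq.symm
    rw [← this]
    exact htrace hmem
  have : f = ↑hu.unit⁻¹ * ((⟨(h : ℂ → ℂ), hhR⟩ : R) * f) := by
    rw [← mul_assoc, hu.val_inv_mul, one_mul]
  rw [this]
  exact J₂.mul_mem_left _ hmem2

/-- An ideal of a ring of Nevanlinna–Smirnov type is determined by its trace in `H^∞`. -/
theorem ideal_eq_of_trace_eq (R Hinf : Subring (ℂ → ℂ))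
    (hHinf : ∀ f, f ∈ Hinf ↔ IsHinf f) (hHR : Hinf ≤ R)
    (hRN : ∀ f ∈ R, IsNevanlinna f)
    (hNS : ∀ f : R, ∃ g h : Hinf, ∃ hhR : (h : ℂ → ℂ) ∈ R,
      IsUnit (⟨(h : ℂ → ℂ), hhR⟩ : R) ∧ (h : ℂ → ℂ) * (f : ℂ → ℂ) = g)
    (J₁ J₂ : Ideal R)
    (htrace : Ideal.comap (Subring.inclusion hHR) J₁ =
      Ideal.comap (Subring.inclusion hHR) J₂) :
    J₁ = J₂ :=
  le_antisymm (ideal_le_of_trace_le R Hinf hHR hNS J₁ J₂ htrace.le)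
    (ideal_le_of_trace_le R Hinf hHR hNS J₂ J₁ htrace.ge)
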